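/- The eigenvalues of the linear operator |∇|_N on ℂ^N defined by (|∇|_N f)_k = (1/(2N)) ∑_{ℓ ≠ k} (f_k - f_ℓ)/sin²(π(k-ℓ)/N) are exactly μ_j = j(1 - j/N) for j = 0, 1, ..., N-1, with corresponding eigenvectors V^{(j)} = (1, z^j, z^{2j}, ..., z^{j(N-1)})/√N where z = e^{2πi/N}. -/

import Mathlib

open Complex Finset
noncomputable def zz (N : ℕ) : ℂ := Complex.exp (2 * Real.pi * Complex.I / N)

lemma zz_ne (N : ℕ) : zz N ≠ 0 := Complex.exp_ne_zero _

lemma zz_zpow (N : ℕ) (d : ℤ) : zz N ^ d = Complex.exp (d * (2 * Real.pi * Complex.I / N)) := by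
  rw [zz, ← Complex.exp_int_mul]

lemma zz_pow_N {N : ℕ} (hN : 0 < N) : zz N ^ (N : ℤ) = 1 := by
  rw [zz_zpow]
  have hNC : (N : ℂ) ≠ 0 := Nat.cast_ne_zero.mpr hN.ne'
  rw [show ((N : ℤ) : ℂ) * (2 * Real.pi * Complex.I / N) = 2 * Real.pi * Complex.I by
    push_cast; field_simp]
  exact Complex.exp_two_pi_mul_I

lemma zz_eq_one_iff {N : ℕ} (hN : 0 < N) (d : ℤ) : zz N ^ d = 1 ↔ (N : ℤ) ∣ d := by
  rw [zz_zpow, Complex.exp_eq_one_iff]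
  have hNC : (N : ℂ) ≠ 0 := Nat.cast_ne_zero.mpr hN.ne'
  have h2 : (2 * (Real.pi : ℂ) * Complex.I) ≠ 0 := by
    simp [Real.pi_ne_zero, Complex.I_ne_zero, Complex.ofReal_ne_zero]
  constructor
  · rintro ⟨n, hn⟩
    refine ⟨n, ?_⟩
    have : (d : ℂ) = N * n := by
      field_simp at hn
      apply mul_left_cancel₀ h2
      linear_combination (2 * (Real.pi : ℂ) * Complex.I) * hn
    exact_mod_cast this
  · rintro ⟨n, rfl⟩
    exact ⟨n, by push_cast; field_simp⟩

lemma geom_fin {N : ℕ} (hN : 0 < N) (d : ℤ) (hd : zz N ^ d ≠ 1) :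
    ∑ m : Fin N, zz N ^ ((m : ℤ) * d) = 0 := by
  have h1 : ∀ m : Fin N, zz N ^ ((m : ℤ) * d) = (zz N ^ d) ^ (m : ℕ) := by
    intro m
    rw [mul_comm, zpow_mul, ← zpow_natCast]
  simp_rw [h1]
  rw [Fin.sum_univ_eq_sum_range (fun i => (zz N ^ d) ^ i), geom_sum_eq hd]
  have : (zz N ^ d) ^ N = 1 := by
    rw [← zpow_natCast, ← zpow_mul, mul_comm, zpow_mul, zz_pow_N hN, one_zpow]
  rw [this]
  simp

lemma master {N : ℕ} (hN : 0 < N) (a b : Fin N) :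
    ∑ m : Fin N, zz N ^ ((m : ℤ) * ((a : ℤ) - (b : ℤ))) = if a = b then (N : ℂ) else 0 := by
  by_cases h : a = b
  · subst h
    simp [Finset.card_univ]
  · rw [if_neg h]
    apply geom_fin hN
    rw [Ne, zz_eq_one_iff hN]
    intro hdvd
    have h1 : (a : ℤ) - b = 0 := by
      rcases hdvd with ⟨c, hc⟩
      have ha := a.isLt; have hb := b.isLt
      have hc0 : c = 0 := by nlinarith [a.isLt, b.isLt, hc]
      subst hc0
      simpa using hc
    exact h (Fin.ext (by omega))

lemma poly_id (v : ℂ) (j : ℕ) :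
    v * (v ^ j - 1) = (v - 1) ^ 2 * (∑ r ∈ Finset.range j, ∑ s ∈ Finset.range (r + 1), v ^ s)
      + j * (v - 1) := by
  induction j with
  | zero => simp
  | succ n ih =>
    rw [Finset.sum_range_succ]
    have hg : (∑ s ∈ Finset.range (n + 1), v ^ s) * (v - 1) = v ^ (n + 1) - 1 := geom_sum_mul v (n+1)
    push_cast
    linear_combination ih - (v - 1) * hg

lemma sum_range_cast (n : ℕ) : (∑ r ∈ Finset.range n, (r : ℂ)) * 2 = (n : ℂ) ^ 2 - n := by
  induction n with
  | zero => simp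
  | succ m ih => rw [Finset.sum_range_succ]; push_cast; ring_nf; ring_nf at ih; linear_combination ih

lemma Hlem (v : ℂ) (hv0 : v ≠ 0) (hv1 : v ≠ 1) (j : ℕ) :
    (1 - v ^ j) / ((2 - v - v⁻¹) / 4) =
      4 * (∑ r ∈ Finset.range j, ∑ s ∈ Finset.range (r + 1), v ^ s) + 4 * j / (v - 1) := by
  have hv1' : v - 1 ≠ 0 := sub_ne_zero.mpr hv1
  have hden : (2 - v - v⁻¹) = -(v - 1) ^ 2 / v := by field_simp; ring
  rw [hden]
  have hd2 : -(v - 1) ^ 2 / v / 4 ≠ 0 := by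
    apply div_ne_zero _ (by norm_num)
    apply div_ne_zero _ hv0
    simpa using pow_ne_zero 2 hv1'
  field_simp
  linear_combination poly_id v j

lemma sin_sq {N : ℕ} (hN : 0 < N) (k ℓ : Fin N) :
    ((Real.sin (Real.pi * (((k : ℕ) : ℝ) - ((ℓ : ℕ) : ℝ)) / N) : ℂ)) ^ 2
      = (2 - zz N ^ ((ℓ : ℤ) - (k : ℤ)) - (zz N ^ ((ℓ : ℤ) - (k : ℤ)))⁻¹) / 4 := by
  have hNC : (N : ℂ) ≠ 0 := Nat.cast_ne_zero.mpr hN.ne'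
  set x : ℝ := Real.pi * (((k : ℕ) : ℝ) - ((ℓ : ℕ) : ℝ)) / N with hxdef
  have hu : Complex.exp (-(x:ℂ) * Complex.I) = (Complex.exp ((x:ℂ) * Complex.I))⁻¹ := by
    rw [neg_mul, Complex.exp_neg]
  have hsq : Complex.exp ((x:ℂ) * Complex.I) ^ 2 = zz N ^ ((k : ℤ) - (ℓ : ℤ)) := by
    rw [zz_zpow, ← Complex.exp_nat_mul]
    congr 1
    rw [hxdef]
    push_cast
    field_simp
  have hv : zz N ^ ((ℓ : ℤ) - (k : ℤ)) = (Complex.exp ((x:ℂ) * Complex.I) ^ 2)⁻¹ := by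
    have h1 : (ℓ : ℤ) - (k : ℤ) = -((k : ℤ) - (ℓ : ℤ)) := by ring
    rw [h1, zpow_neg, hsq]
  have hu0 : Complex.exp ((x:ℂ) * Complex.I) ≠ 0 := Complex.exp_ne_zero _
  rw [Complex.ofReal_sin, Complex.sin, hu, hv]
  field_simp
  linear_combination (4 - 8 * Complex.exp ((x:ℂ) * Complex.I)^2 + 4 * Complex.exp ((x:ℂ) * Complex.I)^4) * Complex.I_sq

lemma zz_mod {N : ℕ} (hN : 0 < N) (a : ℕ) : zz N ^ ((a % N : ℕ) : ℤ) = zz N ^ (a : ℤ) := by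
  have hn : a = a % N + N * (a / N) := (Nat.mod_add_div a N).symm
  have h : (a : ℤ) = ((a % N : ℕ) : ℤ) + (N : ℤ) * ((a / N : ℕ) : ℤ) := by
    exact_mod_cast congrArg (fun x : ℕ => (x : ℤ)) hn
  conv_rhs => rw [h]
  rw [zpow_add₀ (zz_ne N), zpow_mul, zz_pow_N hN, one_zpow, mul_one]

lemma zz_fin_sub {N : ℕ} (hN : 0 < N) (a b : Fin N) :
    zz N ^ (((a - b : Fin N) : ℕ) : ℤ) = zz N ^ ((a : ℤ) - (b : ℤ)) := by
  haveI : NeZero N := ⟨hN.ne'⟩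
  have h : ((a - b : Fin N) : ℕ) = (N - b.val + a.val) % N := by rw [Fin.sub_def]
  rw [h, zz_mod hN]
  have hb : b.val ≤ N := b.isLt.le
  have h2 : ((N - b.val + a.val : ℕ) : ℤ) = ((a : ℤ) - b) + N := by
    push_cast [Nat.cast_sub hb]; ring
  rw [h2, zpow_add₀ (zz_ne N), zz_pow_N hN, mul_one]

lemma zz_fin_add {N : ℕ} (hN : 0 < N) (a b : Fin N) :
    zz N ^ (((a + b : Fin N) : ℕ) : ℤ) = zz N ^ ((a : ℤ) + (b : ℤ)) := by
  haveI : NeZero N := ⟨hN.ne'⟩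
  have h : ((a + b : Fin N) : ℕ) = (a.val + b.val) % N := by rw [Fin.add_def]
  rw [h, zz_mod hN]
  norm_cast

lemma zsig {N : ℕ} (hN : 0 < N) (k ℓ : Fin N) :
    zz N ^ (((k + k - ℓ : Fin N) : ℤ) - (k : ℤ)) = (zz N ^ ((ℓ : ℤ) - (k : ℤ)))⁻¹ := by
  have e1 : zz N ^ (((k + k - ℓ : Fin N) : ℕ) : ℤ) = zz N ^ ((k : ℤ) + (k : ℤ) - (ℓ : ℤ)) := by
    rw [zz_fin_sub hN (k + k) ℓ, zpow_sub₀ (zz_ne N), zz_fin_add hN, ← zpow_sub₀ (zz_ne N)]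
  rw [zpow_sub₀ (zz_ne N), e1, ← zpow_sub₀ (zz_ne N), ← zpow_neg]
  congr 1
  ring

lemma fin_eq_of_dvd {N : ℕ} {k ℓ : Fin N} (h : (N : ℤ) ∣ ((ℓ : ℤ) - k)) : ℓ = k := by
  rcases h with ⟨c, hc⟩
  have hc0 : c = 0 := by nlinarith [ℓ.isLt, k.isLt, hc]
  subst hc0
  simp at hc
  exact Fin.ext (by omega)

lemma vne1 {N : ℕ} (hN : 0 < N) {k ℓ : Fin N} (h : ℓ ≠ k) : zz N ^ ((ℓ : ℤ) - k) ≠ 1 := by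
  rw [Ne, zz_eq_one_iff hN]
  exact fun hd => h (fin_eq_of_dvd hd)

lemma B1 {N : ℕ} (hN : 0 < N) (k : Fin N) (s : ℕ) (hs : s < N) :
    ∑ ℓ ∈ Finset.univ.filter (fun ℓ : Fin N => ℓ ≠ k), (zz N ^ ((ℓ : ℤ) - (k : ℤ))) ^ s
      = (if s = 0 then (N : ℂ) else 0) - 1 := by
  have hfull : ∑ ℓ : Fin N, (zz N ^ ((ℓ : ℤ) - (k : ℤ))) ^ s
      = if s = 0 then (N : ℂ) else 0 := by
    by_cases h0 : s = 0
    · subst h0; simp [Finset.card_univ]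
    · rw [if_neg h0]
      have hterm : ∀ ℓ : Fin N, (zz N ^ ((ℓ : ℤ) - (k : ℤ))) ^ s
          = zz N ^ (-((k : ℤ) * s)) * zz N ^ ((ℓ : ℤ) * s) := by
        intro ℓ
        rw [← zpow_natCast ((zz N ^ ((ℓ:ℤ) - k))) s, ← zpow_mul, ← zpow_add₀ (zz_ne N)]
        congr 1; ring
      simp_rw [hterm]
      rw [← Finset.mul_sum, geom_fin hN (s : ℤ), mul_zero]
      rw [Ne, zz_eq_one_iff hN]
      intro ⟨c, hc⟩
      have hc0 : c = 0 := by nlinarith [hc]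
      subst hc0
      simp at hc
      omega
  have hsplit : ∑ ℓ ∈ Finset.univ.filter (fun ℓ : Fin N => ℓ ≠ k),
        (zz N ^ ((ℓ : ℤ) - (k : ℤ))) ^ s
      = (∑ ℓ : Fin N, (zz N ^ ((ℓ : ℤ) - (k : ℤ))) ^ s) - (zz N ^ ((k : ℤ) - (k : ℤ))) ^ s := by
    rw [Finset.filter_ne' Finset.univ k, ← Finset.sum_erase_add Finset.univ _ (Finset.mem_univ k)]
    ring
  rw [hsplit, hfull]
  simp

lemma B2 {N : ℕ} (hN2 : 2 ≤ N) (k : Fin N) :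
    ∑ ℓ ∈ Finset.univ.filter (fun ℓ : Fin N => ℓ ≠ k), (1 / (zz N ^ ((ℓ : ℤ) - (k : ℤ)) - 1))
      = -(((N : ℂ) - 1) / 2) := by
  have hN : 0 < N := by omega
  haveI : NeZero N := ⟨hN.ne'⟩
  have key : ∑ ℓ ∈ Finset.univ.filter (fun ℓ : Fin N => ℓ ≠ k),
      (1 / (zz N ^ ((ℓ : ℤ) - (k : ℤ)) - 1) + 1 / 2) = 0 := by
    apply Finset.sum_involution (g := fun ℓ _ => k + k - ℓ)
    · intro ℓ ha
      have hℓ : ℓ ≠ k := (Finset.mem_filter.mp ha).2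
      have hv1 : zz N ^ ((ℓ : ℤ) - k) ≠ 1 := vne1 hN hℓ
      have hv0 : zz N ^ ((ℓ : ℤ) - k) ≠ 0 := zpow_ne_zero _ (zz_ne N)
      rw [zsig hN k ℓ]
      set v := zz N ^ ((ℓ : ℤ) - k) with hv
      have h1 : v - 1 ≠ 0 := sub_ne_zero.mpr hv1
      have h1v : (1 : ℂ) - v ≠ 0 := fun h => hv1 (by linear_combination -h)
      have hsub : v⁻¹ - 1 = (1 - v) / v := by field_simp
      rw [hsub, one_div_div]
      field_simp
      ring
    · intro ℓ ha hne heq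
      apply hne
      have hℓ : ℓ ≠ k := (Finset.mem_filter.mp ha).2
      have hv1 : zz N ^ ((ℓ : ℤ) - k) ≠ 1 := vne1 hN hℓ
      have hv0 : zz N ^ ((ℓ : ℤ) - k) ≠ 0 := zpow_ne_zero _ (zz_ne N)
      have hz := zsig hN k ℓ
      rw [heq] at hz
      set v := zz N ^ ((ℓ : ℤ) - k) with hv
      have hv2 : (v - 1) * (v + 1) = 0 := by
        have : v * v = 1 := by
          nth_rewrite 2 [hz]
          exact mul_inv_cancel₀ hv0
        linear_combination this
      have hvm1 : v = -1 := by
        rcases mul_eq_zero.mp hv2 with h | h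
        · exact absurd (by linear_combination h) hv1
        · linear_combination h
      rw [hvm1]
      norm_num
    · intro ℓ ha
      rw [Finset.mem_filter]
      refine ⟨Finset.mem_univ _, ?_⟩
      intro h
      apply (Finset.mem_filter.mp ha).2
      have : ℓ = k + k - (k + k - ℓ) := by abel
      rw [this, h]
      abel
    · intro ℓ ha
      abel
  have hcard : (Finset.univ.filter (fun ℓ : Fin N => ℓ ≠ k)).card = N - 1 := by
    rw [Finset.filter_ne' Finset.univ k, Finset.card_erase_of_mem (Finset.mem_univ k),
      Finset.card_univ, Fintype.card_fin]
  rw [Finset.sum_add_distrib, Finset.sum_const, hcard] at key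
  have hns : ((N - 1 : ℕ) : ℂ) = (N : ℂ) - 1 := by
    push_cast [Nat.cast_sub (by omega : 1 ≤ N)]
    ring
  rw [nsmul_eq_mul, hns] at key
  linear_combination key

lemma key_sum {N : ℕ} (hN2 : 2 ≤ N) (j k : Fin N) :
    ∑ ℓ ∈ Finset.univ.filter (fun ℓ : Fin N => ℓ ≠ k),
        (zz N ^ ((j : ℕ) * (k : ℕ)) - zz N ^ ((j : ℕ) * (ℓ : ℕ))) /
          ((Real.sin (Real.pi * (((k : ℕ) : ℝ) - ((ℓ : ℕ) : ℝ)) / N) : ℂ)) ^ 2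
      = 2 * ((j : ℕ) : ℂ) * ((N : ℂ) - ((j : ℕ) : ℂ)) * zz N ^ ((j : ℕ) * (k : ℕ)) := by
  have hN : 0 < N := by omega
  have step : ∀ ℓ ∈ Finset.univ.filter (fun ℓ : Fin N => ℓ ≠ k),
      (zz N ^ ((j : ℕ) * (k : ℕ)) - zz N ^ ((j : ℕ) * (ℓ : ℕ))) /
          ((Real.sin (Real.pi * (((k : ℕ) : ℝ) - ((ℓ : ℕ) : ℝ)) / N) : ℂ)) ^ 2
        = zz N ^ ((j : ℕ) * (k : ℕ)) *
            (4 * (∑ r ∈ Finset.range (j : ℕ), ∑ s ∈ Finset.range (r + 1),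
                (zz N ^ ((ℓ : ℤ) - (k : ℤ))) ^ s)
             + 4 * ((j : ℕ) : ℂ) / (zz N ^ ((ℓ : ℤ) - (k : ℤ)) - 1)) := by
    intro ℓ hmem
    have hℓ : ℓ ≠ k := (Finset.mem_filter.mp hmem).2
    have hv0 : zz N ^ ((ℓ : ℤ) - (k : ℤ)) ≠ 0 := zpow_ne_zero _ (zz_ne N)
    have hv1 : zz N ^ ((ℓ : ℤ) - (k : ℤ)) ≠ 1 := vne1 hN hℓ
    have hnum : zz N ^ ((j : ℕ) * (ℓ : ℕ))
        = zz N ^ ((j : ℕ) * (k : ℕ)) * (zz N ^ ((ℓ : ℤ) - (k : ℤ))) ^ (j : ℕ) := by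
      rw [← zpow_natCast (zz N) ((j : ℕ) * (k : ℕ)), ← zpow_natCast (zz N) ((j : ℕ) * (ℓ : ℕ)),
        ← zpow_natCast (zz N ^ ((ℓ : ℤ) - (k : ℤ))) (j : ℕ), ← zpow_mul,
        ← zpow_add₀ (zz_ne N)]
      congr 1
      push_cast
      ring
    rw [sin_sq hN k ℓ, hnum,
      show zz N ^ ((j : ℕ) * (k : ℕ)) -
          zz N ^ ((j : ℕ) * (k : ℕ)) * (zz N ^ ((ℓ : ℤ) - (k : ℤ))) ^ (j : ℕ)
        = zz N ^ ((j : ℕ) * (k : ℕ)) * (1 - (zz N ^ ((ℓ : ℤ) - (k : ℤ))) ^ (j : ℕ)) by ring,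
      mul_div_assoc, Hlem _ hv0 hv1 (j : ℕ)]
  rw [Finset.sum_congr rfl step, ← Finset.mul_sum, Finset.sum_add_distrib]
  have hA : (∑ ℓ ∈ Finset.univ.filter (fun ℓ : Fin N => ℓ ≠ k),
        4 * (∑ r ∈ Finset.range (j : ℕ), ∑ s ∈ Finset.range (r + 1),
            (zz N ^ ((ℓ : ℤ) - (k : ℤ))) ^ s))
      = 4 * (((j : ℕ) : ℂ) * ((N : ℂ) - 1) - ((((j : ℕ) : ℂ) ^ 2 - ((j : ℕ) : ℂ)) / 2)) := by
    rw [← Finset.mul_sum]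
    congr 1
    rw [Finset.sum_comm]
    have inner : ∀ r ∈ Finset.range (j : ℕ),
        (∑ ℓ ∈ Finset.univ.filter (fun ℓ : Fin N => ℓ ≠ k), ∑ s ∈ Finset.range (r + 1),
          (zz N ^ ((ℓ : ℤ) - (k : ℤ))) ^ s) = (N : ℂ) - 1 - (r : ℂ) := by
      intro r hr
      have hrj : r < (j : ℕ) := Finset.mem_range.mp hr
      rw [Finset.sum_comm]
      have hin : ∀ s ∈ Finset.range (r + 1),
          (∑ ℓ ∈ Finset.univ.filter (fun ℓ : Fin N => ℓ ≠ k),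
            (zz N ^ ((ℓ : ℤ) - (k : ℤ))) ^ s) = (if s = 0 then (N : ℂ) else 0) - 1 := by
        intro s hs
        exact B1 hN k s (by have := Finset.mem_range.mp hs; omega)
      rw [Finset.sum_congr rfl hin, Finset.sum_sub_distrib, Finset.sum_ite_eq' (Finset.range (r + 1)) 0 (fun _ => (N : ℂ))]
      simp [Finset.mem_range]
      push_cast
      ring
    rw [Finset.sum_congr rfl inner, Finset.sum_sub_distrib, Finset.sum_sub_distrib,
      Finset.sum_const, Finset.sum_const, Finset.card_range]
    have := sum_range_cast (j : ℕ)
    push_cast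
    linear_combination (-1 : ℂ) / 2 * this
  have hB : (∑ ℓ ∈ Finset.univ.filter (fun ℓ : Fin N => ℓ ≠ k),
        4 * ((j : ℕ) : ℂ) / (zz N ^ ((ℓ : ℤ) - (k : ℤ)) - 1))
      = 4 * ((j : ℕ) : ℂ) * (-(((N : ℂ) - 1) / 2)) := by
    have h1 : ∀ ℓ ∈ Finset.univ.filter (fun ℓ : Fin N => ℓ ≠ k),
        4 * ((j : ℕ) : ℂ) / (zz N ^ ((ℓ : ℤ) - (k : ℤ)) - 1)
          = 4 * ((j : ℕ) : ℂ) * (1 / (zz N ^ ((ℓ : ℤ) - (k : ℤ)) - 1)) := by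
      intro ℓ _; ring
    rw [Finset.sum_congr rfl h1, ← Finset.mul_sum, B2 hN2 k]
  rw [hA, hB]
  ring

lemma expE {N : ℕ} (hN : 0 < N) (a b : ℕ) :
    Complex.exp (2 * Real.pi * Complex.I * a * b / N) = zz N ^ (a * b) := by
  rw [zz, ← Complex.exp_nat_mul]
  congr 1
  push_cast
  ring

lemma conj_zz (N : ℕ) : (starRingEnd ℂ) (zz N) = (zz N)⁻¹ := by
  rw [zz, ← Complex.exp_conj, ← Complex.exp_neg]
  congr 1
  simp [map_div₀, Complex.conj_I, map_ofNat]
  ring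

lemma conj_zz_pow (N : ℕ) (n : ℕ) :
    (starRingEnd ℂ) (zz N ^ n) = zz N ^ (-(n : ℤ)) := by
  rw [map_pow, conj_zz, inv_pow, zpow_neg, zpow_natCast]

lemma ortho {N : ℕ} (hN : 0 < N) (a b : Fin N) :
    ∑ m : Fin N, (starRingEnd ℂ) (zz N ^ ((a : ℕ) * (m : ℕ))) * zz N ^ ((b : ℕ) * (m : ℕ))
      = if a = b then (N : ℂ) else 0 := by
  have hterm : ∀ m : Fin N,
      (starRingEnd ℂ) (zz N ^ ((a : ℕ) * (m : ℕ))) * zz N ^ ((b : ℕ) * (m : ℕ))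
        = zz N ^ ((m : ℤ) * ((b : ℤ) - (a : ℤ))) := by
    intro m
    rw [conj_zz_pow, ← zpow_natCast (zz N) ((b : ℕ) * (m : ℕ)), ← zpow_add₀ (zz_ne N)]
    congr 1
    push_cast
    ring
  simp_rw [hterm]
  rw [master hN b a]
  by_cases h : a = b
  · subst h; simp
  · rw [if_neg h, if_neg (fun hh => h hh.symm)]

theorem eigenvalues_nablaN (N : ℕ) (hN : 2 ≤ N)
    (op : (Fin N → ℂ) → (Fin N → ℂ))
    (hop : ∀ f : Fin N → ℂ, ∀ k : Fin N,
      op f k = (1 / (2 * (N : ℂ))) *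
        ∑ ℓ ∈ Finset.univ.filter (fun ℓ : Fin N => ℓ ≠ k),
          (f k - f ℓ) /
            ((Real.sin (Real.pi * (((k : ℕ) : ℝ) - ((ℓ : ℕ) : ℝ)) / N) : ℂ)) ^ 2) :
    (∀ j : Fin N,
      op (fun k : Fin N =>
          Complex.exp (2 * Real.pi * Complex.I * (j : ℕ) * (k : ℕ) / N) / (Real.sqrt N : ℂ)) =
        fun k : Fin N =>
          ((((j : ℕ) : ℂ) * (1 - ((j : ℕ) : ℂ) / N))) *
            (Complex.exp (2 * Real.pi * Complex.I * (j : ℕ) * (k : ℕ) / N) / (Real.sqrt N : ℂ))) ∧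
    (∀ μ : ℂ, (∃ f : Fin N → ℂ, f ≠ 0 ∧ op f = fun k => μ * f k) →
      ∃ j : Fin N, μ = (((j : ℕ) : ℂ) * (1 - ((j : ℕ) : ℂ) / N))) := by
  have hN0 : 0 < N := by omega
  have hNC : (N : ℂ) ≠ 0 := Nat.cast_ne_zero.mpr hN0.ne'
  have hs0 : ((Real.sqrt N : ℝ) : ℂ) ≠ 0 := by
    rw [Complex.ofReal_ne_zero]
    exact (Real.sqrt_pos.mpr (by exact_mod_cast hN0)).ne'
  set Vv : Fin N → Fin N → ℂ := fun a m => zz N ^ ((a : ℕ) * (m : ℕ)) / (Real.sqrt N : ℂ)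
    with hV
  have hfuneq : ∀ j : Fin N,
      (fun k : Fin N => Complex.exp (2 * Real.pi * Complex.I * (j : ℕ) * (k : ℕ) / N) /
        (Real.sqrt N : ℂ)) = Vv j := by
    intro j
    funext k
    rw [hV]
    simp only
    rw [expE hN0]
  have part1 : ∀ j : Fin N,
      op (Vv j) = fun k => (((j : ℕ) : ℂ) * (1 - ((j : ℕ) : ℂ) / N)) * Vv j k := by
    intro j
    funext k
    rw [hop]
    have hterm : ∀ ℓ ∈ Finset.univ.filter (fun ℓ : Fin N => ℓ ≠ k),
        (Vv j k - Vv j ℓ) /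
            ((Real.sin (Real.pi * (((k : ℕ) : ℝ) - ((ℓ : ℕ) : ℝ)) / N) : ℂ)) ^ 2
          = (1 / ((Real.sqrt N : ℝ) : ℂ)) *
            ((zz N ^ ((j : ℕ) * (k : ℕ)) - zz N ^ ((j : ℕ) * (ℓ : ℕ))) /
              ((Real.sin (Real.pi * (((k : ℕ) : ℝ) - ((ℓ : ℕ) : ℝ)) / N) : ℂ)) ^ 2) := by
      intro ℓ _
      rw [hV]
      simp only
      ring
    rw [Finset.sum_congr rfl hterm, ← Finset.mul_sum, key_sum hN j k, hV]
    simp only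
    field_simp
  constructor
  · intro j
    rw [hfuneq j, part1 j]
    funext k
    rw [hV]
    simp only
    rw [expE hN0]
  · intro μ ⟨f, hf0, hfe⟩
    -- orthonormality
    have hss : ((Real.sqrt N : ℝ) : ℂ) * ((Real.sqrt N : ℝ) : ℂ) = (N : ℂ) := by
      rw [← Complex.ofReal_mul, Real.mul_self_sqrt (by positivity)]
      norm_cast
    have honorm : ∀ a b : Fin N,
        ∑ m : Fin N, (starRingEnd ℂ) (Vv a m) * Vv b m = if a = b then 1 else 0 := by
      intro a b
      have h1 : ∀ m : Fin N, (starRingEnd ℂ) (Vv a m) * Vv b m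
          = ((starRingEnd ℂ) (zz N ^ ((a : ℕ) * (m : ℕ))) * zz N ^ ((b : ℕ) * (m : ℕ))) /
            (N : ℂ) := by
        intro m
        rw [hV]
        simp only
        rw [map_div₀, Complex.conj_ofReal, div_mul_div_comm, hss]
      simp_rw [h1]
      rw [← Finset.sum_div, ortho hN0 a b]
      by_cases h : a = b
      · subst h; simp [hNC]
      · simp [h]
    have hsymm : ∀ a m : Fin N, Vv a m = Vv m a := by
      intro a m
      rw [hV]
      simp only
      rw [mul_comm]
    have hexp : ∀ g : Fin N → ℂ, ∀ m : Fin N,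
        g m = ∑ a : Fin N, (∑ m' : Fin N, (starRingEnd ℂ) (Vv a m') * g m') * Vv a m := by
      intro g m
      simp_rw [Finset.sum_mul]
      rw [Finset.sum_comm]
      have h2 : ∀ m' : Fin N,
          ∑ a : Fin N, (starRingEnd ℂ) (Vv a m') * g m' * Vv a m
            = g m' * (if m' = m then 1 else 0) := by
        intro m'
        have h3 : ∀ a : Fin N, (starRingEnd ℂ) (Vv a m') * g m' * Vv a m
            = g m' * ((starRingEnd ℂ) (Vv m' a) * Vv m a) := by
          intro a
          rw [hsymm a m', hsymm a m]
          ring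
        simp_rw [h3]
        rw [← Finset.mul_sum, honorm m' m]
      simp_rw [h2]
      simp only [mul_ite, mul_one, mul_zero]
      rw [Finset.sum_ite_eq' Finset.univ m g]
      simp
    set c : Fin N → ℂ := fun a => ∑ m' : Fin N, (starRingEnd ℂ) (Vv a m') * f m' with hc
    have hexpf : ∀ m : Fin N, f m = ∑ a : Fin N, c a * Vv a m := by
      intro m
      simp only [hc]
      exact hexp f m
    have hopf : ∀ k : Fin N,
        op f k = ∑ a : Fin N, (c a * ((((a : ℕ) : ℂ) * (1 - ((a : ℕ) : ℂ) / N)))) * Vv a k := by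
      intro k
      rw [hop]
      have h1 : ∀ ℓ ∈ Finset.univ.filter (fun ℓ : Fin N => ℓ ≠ k),
          (f k - f ℓ) /
              ((Real.sin (Real.pi * (((k : ℕ) : ℝ) - ((ℓ : ℕ) : ℝ)) / N) : ℂ)) ^ 2
            = ∑ a : Fin N, c a * ((Vv a k - Vv a ℓ) /
              ((Real.sin (Real.pi * (((k : ℕ) : ℝ) - ((ℓ : ℕ) : ℝ)) / N) : ℂ)) ^ 2) := by
        intro ℓ _
        rw [hexpf k, hexpf ℓ, ← Finset.sum_sub_distrib, Finset.sum_div]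
        apply Finset.sum_congr rfl
        intro a _
        ring
      rw [Finset.sum_congr rfl h1, Finset.sum_comm, Finset.mul_sum]
      have h4 : ∀ a : Fin N,
          (1 / (2 * (N : ℂ))) * ∑ ℓ ∈ Finset.univ.filter (fun ℓ : Fin N => ℓ ≠ k),
              c a * ((Vv a k - Vv a ℓ) /
                ((Real.sin (Real.pi * (((k : ℕ) : ℝ) - ((ℓ : ℕ) : ℝ)) / N) : ℂ)) ^ 2)
            = (c a * ((((a : ℕ) : ℂ) * (1 - ((a : ℕ) : ℂ) / N)))) * Vv a k := by
        intro a
        rw [← Finset.mul_sum, ← mul_assoc, mul_comm (1 / (2 * (N : ℂ))) (c a), mul_assoc]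
        have h5 : (1 / (2 * (N : ℂ))) * ∑ ℓ ∈ Finset.univ.filter (fun ℓ : Fin N => ℓ ≠ k),
            ((Vv a k - Vv a ℓ) /
              ((Real.sin (Real.pi * (((k : ℕ) : ℝ) - ((ℓ : ℕ) : ℝ)) / N) : ℂ)) ^ 2)
            = op (Vv a) k := (hop (Vv a) k).symm
        rw [h5, part1 a]
        ring
      exact Finset.sum_congr rfl fun a _ => h4 a
    have hμf : ∀ a₀ : Fin N, c a₀ * ((((a₀ : ℕ) : ℂ) * (1 - ((a₀ : ℕ) : ℂ) / N))) = μ * c a₀ := by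
      have hext : ∀ (d : Fin N → ℂ) (a₀ : Fin N),
          ∑ m : Fin N, (starRingEnd ℂ) (Vv a₀ m) * (∑ a : Fin N, d a * Vv a m) = d a₀ := by
        intro d a₀
        simp_rw [Finset.mul_sum]
        rw [Finset.sum_comm]
        have h3 : ∀ a : Fin N,
            ∑ m : Fin N, (starRingEnd ℂ) (Vv a₀ m) * (d a * Vv a m)
              = d a * (if a₀ = a then 1 else 0) := by
          intro a
          have h6 : ∀ m : Fin N, (starRingEnd ℂ) (Vv a₀ m) * (d a * Vv a m)
              = d a * ((starRingEnd ℂ) (Vv a₀ m) * Vv a m) := fun m => by ring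
          simp_rw [h6]
          rw [← Finset.mul_sum, honorm a₀ a]
        simp_rw [h3]
        simp only [mul_ite, mul_one, mul_zero, Finset.sum_ite_eq, Finset.mem_univ, if_true]
      intro a₀
      have hLR : ∀ m : Fin N,
          (∑ a : Fin N, (c a * ((((a : ℕ) : ℂ) * (1 - ((a : ℕ) : ℂ) / N)))) * Vv a m)
            = ∑ a : Fin N, (μ * c a) * Vv a m := by
        intro m
        rw [← hopf m]
        have h7 : op f m = μ * f m := congrFun hfe m
        rw [h7, hexpf m, Finset.mul_sum]
        apply Finset.sum_congr rfl
        intro a _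
        ring
      have e1 := hext (fun a => c a * ((((a : ℕ) : ℂ) * (1 - ((a : ℕ) : ℂ) / N)))) a₀
      have e2 := hext (fun a => μ * c a) a₀
      rw [← e1, ← e2]
      apply Finset.sum_congr rfl
      intro m _
      rw [hLR m]
    have hnz : ∃ a : Fin N, c a ≠ 0 := by
      by_contra hall
      push_neg at hall
      apply hf0
      funext m
      rw [hexpf m]
      simp [hall]
    obtain ⟨a, ha⟩ := hnz
    refine ⟨a, ?_⟩
    have h9 := hμf a
    have h8 : (((a : ℕ) : ℂ) * (1 - ((a : ℕ) : ℂ) / N)) = μ := by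
      apply mul_left_cancel₀ ha
      linear_combination h9
    exact h8.symm
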